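/- Let Γ be a nonempty closed subset of EuclideanSpace ℝ (Fin n), let d(x) = infDist(x, Γ), let x ∉ Γ, and let y ∈ Γ be a closest point to x, i.e., dist(x, y) = infDist(x, Γ). Then for every t with 0 < t < 1, the function d is differentiable at the point z = x + t • (y − x), and the gradient of d at z equals the unit vector (x − y)/‖x − y‖. -/

import Mathlib

open Metric Asymptotics

/-- Gradient of the norm at a nonzero point of a real inner product space. -/
lemma hasGradientAt_norm_aux {E : Type*} [NormedAddCommGroup E] [InnerProductSpace ℝ E]
    [CompleteSpace E] {z : E} (hz : z ≠ 0) :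
    HasGradientAt (fun w => ‖w‖) (‖z‖⁻¹ • z) z := by
  rw [hasGradientAt_iff_hasFDerivAt]
  have hsq : HasFDerivAt (fun w : E => ‖w‖ ^ 2) (2 • (innerSL ℝ z)) z :=
    (hasStrictFDerivAt_norm_sq z).hasFDerivAt
  have hnz : ‖z‖ ^ 2 ≠ 0 := pow_ne_zero 2 (norm_ne_zero_iff.mpr hz)
  have hsqrt : HasDerivAt Real.sqrt (1 / (2 * Real.sqrt (‖z‖ ^ 2))) (‖z‖ ^ 2) :=
    Real.hasDerivAt_sqrt hnz
  have hcomp := hsqrt.comp_hasFDerivAt z hsq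
  simp only [Function.comp_def] at hcomp
  have heq : (fun w : E => Real.sqrt (‖w‖ ^ 2)) = fun w => ‖w‖ := by
    funext w; rw [Real.sqrt_sq (norm_nonneg w)]
  rw [heq] at hcomp
  convert hcomp using 1
  case e'_9 => rfl
  ext v
  simp only [InnerProductSpace.toDual_apply_apply, ContinuousLinearMap.coe_smul',
    Pi.smul_apply, ContinuousLinearMap.smul_apply, innerSL_apply_apply, smul_eq_mul]
  rw [Real.sqrt_sq (norm_nonneg z), real_inner_smul_left]
  ring

/-- The distance function to a nonempty closed set `Γ` is differentiable at every interior
point of a minimizing segment, and its gradient there is the unit vector from the closest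
point `y` toward `x`. -/
theorem infDist_differentiable_along_segment
    {n : ℕ} (Γ : Set (EuclideanSpace ℝ (Fin n))) (hne : Γ.Nonempty) (hcl : IsClosed Γ)
    (x : EuclideanSpace ℝ (Fin n)) (hx : x ∉ Γ)
    (y : EuclideanSpace ℝ (Fin n)) (hy : y ∈ Γ)
    (hxy : dist x y = Metric.infDist x Γ)
    (t : ℝ) (ht0 : 0 < t) (ht1 : t < 1) :
    DifferentiableAt ℝ (fun z => Metric.infDist z Γ) (x + t • (y - x)) ∧
      gradient (fun z => Metric.infDist z Γ) (x + t • (y - x)) = ‖x - y‖⁻¹ • (x - y) := by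
  set z : EuclideanSpace ℝ (Fin n) := x + t • (y - x) with hz
  set u : EuclideanSpace ℝ (Fin n) := ‖x - y‖⁻¹ • (x - y) with hu
  have hxney : x ≠ y := fun h => hx (h ▸ hy)
  have hxy0 : x - y ≠ 0 := sub_ne_zero.mpr hxney
  have hxyn : (0:ℝ) < ‖x - y‖ := norm_pos_iff.mpr hxy0
  have hzy : z - y = (1 - t) • (x - y) := by rw [hz]; module
  have hxz : x - z = t • (x - y) := by rw [hz]; module
  have hzyne : z - y ≠ 0 := by
    rw [hzy]; exact smul_ne_zero (by linarith) hxy0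
  have hxzne : x - z ≠ 0 := by
    rw [hxz]; exact smul_ne_zero (ne_of_gt ht0) hxy0
  have hzyn : ‖z - y‖ = (1 - t) * ‖x - y‖ := by
    rw [hzy, norm_smul, Real.norm_eq_abs, abs_of_pos (by linarith)]
  have hxzn : ‖x - z‖ = t * ‖x - y‖ := by
    rw [hxz, norm_smul, Real.norm_eq_abs, abs_of_pos ht0]
  set d : EuclideanSpace ℝ (Fin n) → ℝ := fun w => Metric.infDist w Γ with hd
  have hdx : d x = ‖x - y‖ := by
    show Metric.infDist x Γ = ‖x - y‖; rw [← hxy, dist_eq_norm]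
  have hdz : d z = (1 - t) * ‖x - y‖ := by
    have h1 : d z ≤ (1 - t) * ‖x - y‖ := by
      calc d z ≤ dist z y := Metric.infDist_le_dist_of_mem hy
        _ = (1 - t) * ‖x - y‖ := by rw [dist_eq_norm, hzyn]
    have h2 : d x ≤ d z + dist x z := Metric.infDist_le_infDist_add_dist
    have h4 : dist x z = t * ‖x - y‖ := by rw [dist_eq_norm, hxzn]
    linarith
  have hupper : ∀ w, d w ≤ ‖w - y‖ := fun w => by
    calc d w ≤ dist w y := Metric.infDist_le_dist_of_mem hy
      _ = ‖w - y‖ := dist_eq_norm _ _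
  have hlower : ∀ w, ‖x - y‖ - ‖x - w‖ ≤ d w := fun w => by
    have h2 : d x ≤ d w + dist x w := Metric.infDist_le_infDist_add_dist
    have h4 : dist x w = ‖x - w‖ := dist_eq_norm _ _
    linarith
  -- gradients of the bounds at z
  have hvec1 : ‖z - y‖⁻¹ • (z - y) = u := by
    rw [hzyn, hzy, hu, mul_inv, smul_smul]
    congr 1
    have h1t : (1:ℝ) - t ≠ 0 := by linarith
    field_simp
  have hvec2 : ‖x - z‖⁻¹ • (x - z) = u := by
    rw [hxzn, hxz, hu, mul_inv, smul_smul]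
    congr 1
    field_simp
  have hgu : HasFDerivAt (fun w : EuclideanSpace ℝ (Fin n) => ‖w - y‖)
      ((InnerProductSpace.toDual ℝ (EuclideanSpace ℝ (Fin n))) u) z := by
    have h1 := hasGradientAt_norm_aux hzyne
    rw [hvec1, hasGradientAt_iff_hasFDerivAt] at h1
    have h2 : HasFDerivAt (fun w : EuclideanSpace ℝ (Fin n) => w - y)
        (ContinuousLinearMap.id ℝ _) z := (hasFDerivAt_id z).sub_const y
    have h3 := h1.comp z h2
    exact h3
  have hgl : HasFDerivAt (fun w : EuclideanSpace ℝ (Fin n) => ‖x - y‖ - ‖x - w‖)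
      ((InnerProductSpace.toDual ℝ (EuclideanSpace ℝ (Fin n))) u) z := by
    have h1 := hasGradientAt_norm_aux hxzne
    rw [hvec2, hasGradientAt_iff_hasFDerivAt] at h1
    have h2 : HasFDerivAt (fun w : EuclideanSpace ℝ (Fin n) => x - w)
        (-(ContinuousLinearMap.id ℝ _)) z := (hasFDerivAt_id z).const_sub x
    have h3 := (h1.comp z h2).const_sub ‖x - y‖
    convert h3 using 1
    all_goals (ext v; simp)
  set L := (InnerProductSpace.toDual ℝ (EuclideanSpace ℝ (Fin n))) u with hL
  have hfz : ‖z - y‖ = d z := by rw [hzyn, hdz]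
  have hgz : ‖x - y‖ - ‖x - z‖ = d z := by rw [hxzn, hdz]; ring
  have hdF : HasFDerivAt d L z := by
    apply hasFDerivAt_iff_isLittleO.mpr
    have hU : (fun w => ‖w - y‖ - ‖z - y‖ - L (w - z)) =o[nhds z] fun w => w - z := by
      have := hgu.isLittleO
      simpa using this
    have hLo : (fun w => (‖x - y‖ - ‖x - w‖) - (‖x - y‖ - ‖x - z‖) - L (w - z))
        =o[nhds z] fun w => w - z := by
      have := hgl.isLittleO
      simpa using this
    have hsum := hU.norm_left.add hLo.norm_left
    refine IsBigO.trans_isLittleO ?_ hsum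
    refine isBigO_of_le _ fun w => ?_
    have h1 : ‖x - y‖ - ‖x - w‖ ≤ d w := hlower w
    have h2 : d w ≤ ‖w - y‖ := hupper w
    rw [Real.norm_eq_abs]
    have hnn : ‖‖‖w - y‖ - ‖z - y‖ - L (w - z)‖ + ‖(‖x - y‖ - ‖x - w‖) - (‖x - y‖ - ‖x - z‖) - L (w - z)‖‖ = |‖w - y‖ - ‖z - y‖ - L (w - z)| + |(‖x - y‖ - ‖x - w‖) - (‖x - y‖ - ‖x - z‖) - L (w - z)| := by
      simp only [Real.norm_eq_abs]
      rw [abs_of_nonneg (by positivity)]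
    rw [hnn]
    have habs1 := le_abs_self (‖w - y‖ - ‖z - y‖ - L (w - z))
    have habs2 := neg_abs_le ((‖x - y‖ - ‖x - w‖) - (‖x - y‖ - ‖x - z‖) - L (w - z))
    have habs3 := abs_nonneg (‖w - y‖ - ‖z - y‖ - L (w - z))
    have habs4 := abs_nonneg ((‖x - y‖ - ‖x - w‖) - (‖x - y‖ - ‖x - z‖) - L (w - z))
    rw [abs_le]
    constructor
    · linarith [hgz, habs2, habs3]
    · linarith [hfz, habs1, habs4]
  have hgrad : HasGradientAt d u z := hasGradientAt_iff_hasFDerivAt.mpr hdF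
  exact ⟨hgrad.differentiableAt, hgrad.gradient⟩
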